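/- Let R be a reduced crystallographic root system with simple roots S and let I be a subset of S with I ≠ S. Then there exists a positive root β ∈ R⁺ \ R_I⁺ such that ⟨Σ_{α ∈ I} ϖ_α − Σ_{γ ∈ R_I⁺} γ , β∨⟩ = 0. -/

import Mathlib

/-!
Common setup: a reduced crystallographic root system realized in a real inner
product space, together with a chosen set of simple roots.  For a root `α`,
`cpair v α = ⟨v, α∨⟩ = 2⟪v,α⟫/⟪α,α⟫` is the pairing with the coroot `α∨`, and
`sref α` is the reflection in `α`.
-/

open scoped RealInnerProductSpace
open Finset

/-- `cpair v α = ⟨v, α∨⟩ = 2⟪v,α⟫/⟪α,α⟫`, the pairing of `v` with the coroot of `α`. -/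
noncomputable def cpair {V : Type*} [NormedAddCommGroup V] [InnerProductSpace ℝ V]
    (v α : V) : ℝ := 2 * ⟪v, α⟫ / ⟪α, α⟫

/-- The reflection in the root `α`: `v ↦ v - ⟨v, α∨⟩ α`. -/
noncomputable def sref {V : Type*} [NormedAddCommGroup V] [InnerProductSpace ℝ V]
    (α : V) : V → V := fun v => v - cpair v α • α

/-- A reduced crystallographic root system in a real inner product space,
with a chosen set of simple roots (every root is an integral linear combination
of the simple roots, with coefficients all nonnegative or all nonpositive). -/
structure RCRS (V : Type*) [NormedAddCommGroup V] [InnerProductSpace ℝ V] where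
  roots : Finset V
  zero_not_mem : (0 : V) ∉ roots
  crystallographic : ∀ α ∈ roots, ∀ β ∈ roots, ∃ n : ℤ, cpair β α = (n : ℝ)
  reflect_mem : ∀ α ∈ roots, ∀ β ∈ roots, sref α β ∈ roots
  reduced : ∀ α ∈ roots, ∀ t : ℝ, t • α ∈ roots → t = 1 ∨ t = -1
  simple : Finset V
  simple_subset : simple ⊆ roots
  simple_indep : LinearIndependent ℝ ((↑) : simple → V)
  exists_coeffs : ∀ β ∈ roots, ∃ c : V → ℤ,
    ((∀ α ∈ simple, 0 ≤ c α) ∨ (∀ α ∈ simple, c α ≤ 0)) ∧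
    β = ∑ α ∈ simple, (c α : ℝ) • α

namespace RCRS

variable {V : Type*} [NormedAddCommGroup V] [InnerProductSpace ℝ V] [DecidableEq V] (Φ : RCRS V)

open Classical in
/-- `R⁺`: the set of positive roots, i.e. the roots that are nonnegative integral
linear combinations of simple roots. -/
noncomputable def posRoots : Finset V :=
  Φ.roots.filter (fun β => ∃ c : V → ℤ, (∀ α ∈ Φ.simple, 0 ≤ c α) ∧
    β = ∑ α ∈ Φ.simple, (c α : ℝ) • α)

open Classical in
/-- `R_I⁺`: the set of positive roots that are integral linear combinations of the
simple roots belonging to `I`. -/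
noncomputable def posRootsOf (I : Finset V) : Finset V :=
  Φ.posRoots.filter (fun β => ∃ c : V → ℤ, β = ∑ α ∈ I, (c α : ℝ) • α)

/-- `ρ`: the half sum of the positive roots. -/
noncomputable def rho : V := (2 : ℝ)⁻¹ • ∑ β ∈ Φ.posRoots, β

/-- `ρ^P`: the half sum of the positive roots that are not in `R_I⁺`. -/
noncomputable def rhoP (I : Finset V) : V :=
  (2 : ℝ)⁻¹ • ∑ β ∈ Φ.posRoots \ Φ.posRootsOf I, β

/-- `ϖ` is a system of fundamental weights: `⟨ϖ α, β∨⟩ = δ_{α β}` for simple `α`, `β`. -/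
def IsFundamentalWeights (ϖ : V → V) : Prop :=
  ∀ α ∈ Φ.simple, ∀ β ∈ Φ.simple, cpair (ϖ α) β = if α = β then 1 else 0

/-- The product of the reflections in the roots listed in `l`
(`wordProd [α₁, …, α_N] = s_{α₁} ∘ ⋯ ∘ s_{α_N}`). -/
noncomputable def wordProd : List V → (V → V) :=
  fun l => l.foldr (fun α f => sref α ∘ f) id

/-- Membership in the subgroup of the Weyl group generated by the reflections
`s_α`, `α ∈ I`. -/
def MemWeyl (I : Finset V) (w : V → V) : Prop :=
  ∃ l : List V, (∀ α ∈ l, α ∈ I) ∧ w = wordProd l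

/-- The length of `w` with respect to the generators `s_α`, `α ∈ I`. -/
noncomputable def lengthWeyl (I : Finset V) (w : V → V) : ℕ :=
  sInf {n | ∃ l : List V, l.length = n ∧ (∀ α ∈ l, α ∈ I) ∧ w = wordProd l}

/-- `w` is the longest element of the subgroup generated by the reflections
`s_α`, `α ∈ I`. -/
def IsLongest (I : Finset V) (w : V → V) : Prop :=
  MemWeyl I w ∧ ∀ u, MemWeyl I u → lengthWeyl I u ≤ lengthWeyl I w

end RCRS


section AuxLemmas
set_option linter.unusedSectionVars false

variable {V : Type*} [NormedAddCommGroup V] [InnerProductSpace ℝ V]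

lemma cpair_add_left (x y α : V) : cpair (x + y) α = cpair x α + cpair y α := by
  unfold cpair; rw [inner_add_left]; ring

lemma cpair_smul_left (r : ℝ) (x α : V) : cpair (r • x) α = r * cpair x α := by
  unfold cpair; rw [real_inner_smul_left]; ring

lemma cpair_neg_left (x α : V) : cpair (-x) α = - cpair x α := by
  unfold cpair; rw [inner_neg_left]; ring

lemma cpair_sum_left {ι : Type*} (s : Finset ι) (f : ι → V) (α : V) :
    cpair (∑ i ∈ s, f i) α = ∑ i ∈ s, cpair (f i) α := by
  classical
  induction s using Finset.cons_induction with
  | empty => simp [cpair]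
  | cons a s ha ih => rw [Finset.sum_cons, Finset.sum_cons, cpair_add_left, ih]

lemma cpair_self {α : V} (hα : α ≠ 0) : cpair α α = 2 := by
  have h : ⟪α, α⟫ ≠ 0 := inner_self_ne_zero.mpr hα
  unfold cpair; field_simp

lemma cpair_eq_zero_of_inner {x α : V} (h : ⟪x, α⟫ = 0) : cpair x α = 0 := by
  simp [cpair, h]

lemma inner_eq_zero_of_cpair {x α : V} (hα : α ≠ 0) (h : cpair x α = 0) : ⟪x, α⟫ = 0 := by
  have hA : ⟪α, α⟫ ≠ 0 := inner_self_ne_zero.mpr hα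
  unfold cpair at h
  field_simp at h
  linarith

lemma sref_apply (α v : V) : sref α v = v - cpair v α • α := rfl

lemma sref_add (α x y : V) : sref α (x + y) = sref α x + sref α y := by
  simp only [sref_apply, cpair_add_left, add_smul]; abel

lemma sref_smul (α : V) (r : ℝ) (x : V) : sref α (r • x) = r • sref α x := by
  simp only [sref_apply, cpair_smul_left, mul_smul, smul_sub]

lemma sref_neg (α x : V) : sref α (-x) = - sref α x := by
  simp only [sref_apply, cpair_neg_left, neg_smul]; abel

lemma sref_sum {ι : Type*} (α : V) (s : Finset ι) (f : ι → V) :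
    sref α (∑ i ∈ s, f i) = ∑ i ∈ s, sref α (f i) := by
  classical
  induction s using Finset.cons_induction with
  | empty => simp [sref, cpair]
  | cons a s ha ih => rw [Finset.sum_cons, Finset.sum_cons, sref_add, ih]

lemma sref_self {α : V} (hα : α ≠ 0) : sref α α = -α := by
  rw [sref_apply, cpair_self hα]; module

lemma sref_of_inner_zero {x α : V} (h : ⟪x, α⟫ = 0) : sref α x = x := by
  rw [sref_apply, cpair_eq_zero_of_inner h]; simp

lemma sref_inner {α : V} (hα : α ≠ 0) (x y : V) :
    ⟪sref α x, sref α y⟫ = ⟪x, y⟫ := by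
  have hA : ⟪α, α⟫ ≠ 0 := inner_self_ne_zero.mpr hα
  simp only [sref_apply, cpair, inner_sub_left, inner_sub_right, real_inner_smul_left,
    real_inner_smul_right]
  rw [real_inner_comm α x, real_inner_comm α y]
  field_simp
  ring

lemma sref_sref {α : V} (hα : α ≠ 0) (x : V) : sref α (sref α x) = x := by
  have h2 : cpair (sref α x) α = - cpair x α := by
    have e : sref α x = x + (-(cpair x α • α)) := by rw [sref_apply]; abel
    rw [e, cpair_add_left, cpair_neg_left, cpair_smul_left, cpair_self hα]; ring
  rw [sref_apply (v := sref α x), h2, sref_apply]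
  module

/-- Action of a word of reflections: `act [α₁,…,αₙ] v = s_{α₁} (… (s_{αₙ} v))`. -/
noncomputable def act (l : List V) (v : V) : V := l.foldr sref v

@[simp] lemma act_nil (v : V) : act ([] : List V) v = v := rfl

@[simp] lemma act_cons (α : V) (l : List V) (v : V) :
    act (α :: l) v = sref α (act l v) := rfl

lemma act_append (l₁ l₂ : List V) (v : V) :
    act (l₁ ++ l₂) v = act l₁ (act l₂ v) := by
  unfold act; rw [List.foldr_append]

lemma act_add (l : List V) (x y : V) : act l (x + y) = act l x + act l y := by
  induction l with
  | nil => rfl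
  | cons a l ih => simp [ih, sref_add]

lemma act_smul (l : List V) (r : ℝ) (x : V) : act l (r • x) = r • act l x := by
  induction l with
  | nil => rfl
  | cons a l ih => simp [ih, sref_smul]

lemma act_neg (l : List V) (x : V) : act l (-x) = - act l x := by
  induction l with
  | nil => rfl
  | cons a l ih => simp [ih, sref_neg]

lemma act_sum {ι : Type*} (l : List V) (s : Finset ι) (f : ι → V) :
    act l (∑ i ∈ s, f i) = ∑ i ∈ s, act l (f i) := by
  induction l with
  | nil => rfl
  | cons a l ih => simp [ih, sref_sum]

lemma act_inner {l : List V} (hl : ∀ α ∈ l, α ≠ 0) (x y : V) :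
    ⟪act l x, act l y⟫ = ⟪x, y⟫ := by
  induction l with
  | nil => rfl
  | cons a l ih =>
    simp only [act_cons]
    rw [sref_inner (hl a (by simp))]
    exact ih (fun α hα => hl α (by simp [hα]))

lemma act_injective {l : List V} (hl : ∀ α ∈ l, α ≠ 0) {x y : V}
    (h : act l x = act l y) : x = y := by
  have h0 : act l (x - y) = 0 := by
    rw [sub_eq_add_neg, act_add, act_neg, h]; simp
  have : ⟪x - y, x - y⟫ = 0 := by
    rw [← act_inner hl (x - y) (x - y), h0]; simp
  have h2 := inner_self_eq_zero.mp this
  exact sub_eq_zero.mp h2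

lemma act_fix {l : List V} {x : V} (h : ∀ α ∈ l, ⟪x, α⟫ = 0) : act l x = x := by
  induction l with
  | nil => rfl
  | cons a l ih =>
    have hx : act l x = x := ih (fun α hα => h α (by simp [hα]))
    simp [hx, sref_of_inner_zero (h a (by simp))]

end AuxLemmas

section RootLemmas
set_option linter.unusedSectionVars false

variable {V : Type*} [NormedAddCommGroup V] [InnerProductSpace ℝ V] [DecidableEq V]
variable (Φ : RCRS V)

lemma root_ne_zero {β : V} (hβ : β ∈ Φ.roots) : β ≠ 0 :=
  fun h => Φ.zero_not_mem (h ▸ hβ)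

lemma neg_mem_roots {β : V} (hβ : β ∈ Φ.roots) : -β ∈ Φ.roots := by
  have := Φ.reflect_mem β hβ β hβ
  rwa [sref_self (root_ne_zero Φ hβ)] at this

lemma act_mem_roots {l : List V} (hl : ∀ α ∈ l, α ∈ Φ.roots) {β : V} (hβ : β ∈ Φ.roots) :
    act l β ∈ Φ.roots := by
  induction l with
  | nil => exact hβ
  | cons a l ih =>
    exact Φ.reflect_mem a (hl a (by simp)) _ (ih (fun α hα => hl α (by simp [hα])))

lemma coeff_unique (f g : V → ℝ)
    (h : ∑ δ ∈ Φ.simple, f δ • δ = ∑ δ ∈ Φ.simple, g δ • δ) :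
    ∀ δ ∈ Φ.simple, f δ = g δ := by
  have h0 : ∑ δ ∈ Φ.simple, (f δ - g δ) • δ = 0 := by
    simp only [sub_smul, Finset.sum_sub_distrib, h, sub_self]
  have h1 : ∑ i : Φ.simple, (f (i : V) - g (i : V)) • (i : V) = 0 := by
    rw [Finset.sum_coe_sort Φ.simple (fun δ => (f δ - g δ) • δ)]; exact h0
  intro δ hδ
  have := linearIndependent_iff'.mp Φ.simple_indep Finset.univ
    (fun i : Φ.simple => f (i : V) - g (i : V)) h1 ⟨δ, hδ⟩ (Finset.mem_univ _)
  have : f δ - g δ = 0 := this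
  linarith

lemma mem_posRoots_iff {β : V} :
    β ∈ Φ.posRoots ↔ β ∈ Φ.roots ∧ ∃ c : V → ℤ, (∀ α ∈ Φ.simple, 0 ≤ c α) ∧
      β = ∑ α ∈ Φ.simple, (c α : ℝ) • α := by
  classical
  unfold RCRS.posRoots
  rw [Finset.mem_filter]

lemma mem_posRootsOf_iff' {I : Finset V} {β : V} :
    β ∈ Φ.posRootsOf I ↔ β ∈ Φ.posRoots ∧ ∃ c : V → ℤ, β = ∑ α ∈ I, (c α : ℝ) • α := by
  classical
  unfold RCRS.posRootsOf
  rw [Finset.mem_filter]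

lemma posRoots_sub_roots : Φ.posRoots ⊆ Φ.roots := by
  intro β hβ; exact ((mem_posRoots_iff Φ).mp hβ).1

/-- If a root has a representation with some strictly positive coefficient, it is positive. -/
lemma pos_of_coeff_pos {β : V} (hβ : β ∈ Φ.roots) (f : V → ℝ)
    (hrep : β = ∑ δ ∈ Φ.simple, f δ • δ) {γ₀ : V} (hγ₀ : γ₀ ∈ Φ.simple) (hpos : 0 < f γ₀) :
    β ∈ Φ.posRoots := by
  obtain ⟨c, hc, hcrep⟩ := Φ.exists_coeffs β hβ
  have huniq : ∀ δ ∈ Φ.simple, (fun δ => (c δ : ℝ)) δ = f δ :=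
    coeff_unique Φ _ _ (by rw [← hcrep, ← hrep])
  rcases hc with hc | hc
  · exact (mem_posRoots_iff Φ).mpr ⟨hβ, c, hc, hcrep⟩
  · exfalso
    have h1 : (c γ₀ : ℝ) = f γ₀ := huniq γ₀ hγ₀
    have h2 : (c γ₀ : ℝ) ≤ 0 := by exact_mod_cast hc γ₀ hγ₀
    linarith

/-- If a root has a representation with all coefficients nonpositive, its negative is positive. -/
lemma neg_pos_of_coeffs_nonpos {β : V} (hβ : β ∈ Φ.roots) (f : V → ℝ)
    (hrep : β = ∑ δ ∈ Φ.simple, f δ • δ) (hf : ∀ δ ∈ Φ.simple, f δ ≤ 0) :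
    -β ∈ Φ.posRoots := by
  obtain ⟨c, hc, hcrep⟩ := Φ.exists_coeffs β hβ
  have huniq : ∀ δ ∈ Φ.simple, (fun δ => (c δ : ℝ)) δ = f δ :=
    coeff_unique Φ _ _ (by rw [← hcrep, ← hrep])
  have hneg : -β = ∑ δ ∈ Φ.simple, ((- c δ : ℤ) : ℝ) • δ := by
    rw [hcrep, ← Finset.sum_neg_distrib]
    exact Finset.sum_congr rfl (fun δ _ => by push_cast; module
    )
  rcases hc with hc | hc
  · exfalso
    have hall : ∀ δ ∈ Φ.simple, (c δ : ℝ) = 0 := by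
      intro δ hδ
      have h1 := huniq δ hδ
      have h2 : (0 : ℝ) ≤ (c δ : ℝ) := by exact_mod_cast hc δ hδ
      have h3 := hf δ hδ
      simp only at h1
      linarith
    have : β = 0 := by
      rw [hcrep]
      exact Finset.sum_eq_zero (fun δ hδ => by rw [hall δ hδ, zero_smul])
    exact root_ne_zero Φ hβ this
  · refine (mem_posRoots_iff Φ).mpr ⟨neg_mem_roots Φ hβ, fun δ => -c δ, ?_, hneg⟩
    intro δ hδ; have := hc δ hδ; dsimp only; omega

lemma not_pos_and_neg_pos {β : V} (h1 : β ∈ Φ.posRoots) (h2 : -β ∈ Φ.posRoots) : False := by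
  obtain ⟨hβ, c, hc, hcrep⟩ := (mem_posRoots_iff Φ).mp h1
  obtain ⟨hβ', c', hc', hcrep'⟩ := (mem_posRoots_iff Φ).mp h2
  have hz : ∑ δ ∈ Φ.simple, ((c δ : ℝ) + (c' δ : ℝ)) • δ = ∑ δ ∈ Φ.simple, (0:ℝ) • δ := by
    simp only [add_smul, Finset.sum_add_distrib, ← hcrep, ← hcrep']
    simp
  have huniq := coeff_unique Φ _ _ hz
  have hall : ∀ δ ∈ Φ.simple, (c δ : ℝ) = 0 := by
    intro δ hδ
    have h1' := huniq δ hδ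
    have h2' : (0:ℝ) ≤ (c δ : ℝ) := by exact_mod_cast hc δ hδ
    have h3' : (0:ℝ) ≤ (c' δ : ℝ) := by exact_mod_cast hc' δ hδ
    linarith
  have : β = 0 := by
    rw [hcrep]; exact Finset.sum_eq_zero (fun δ hδ => by rw [hall δ hδ, zero_smul])
  exact root_ne_zero Φ hβ this

lemma pos_or_neg_pos {β : V} (hβ : β ∈ Φ.roots) : β ∈ Φ.posRoots ∨ -β ∈ Φ.posRoots := by
  obtain ⟨c, hc, hcrep⟩ := Φ.exists_coeffs β hβ
  rcases hc with hc | hc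
  · exact Or.inl ((mem_posRoots_iff Φ).mpr ⟨hβ, c, hc, hcrep⟩)
  · exact Or.inr (neg_pos_of_coeffs_nonpos Φ hβ _ hcrep
      (fun δ hδ => by exact_mod_cast hc δ hδ))

lemma simple_mem_posRoots {α : V} (hα : α ∈ Φ.simple) : α ∈ Φ.posRoots := by
  refine (mem_posRoots_iff Φ).mpr ⟨Φ.simple_subset hα, fun δ => if δ = α then 1 else 0, ?_, ?_⟩
  · intro δ _; dsimp only; split_ifs <;> norm_num
  · have h1 : ∀ δ ∈ Φ.simple, (((if δ = α then (1:ℤ) else 0) : ℤ) : ℝ) • δ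
        = if δ = α then δ else 0 := by
      intro δ _; split_ifs <;> simp
    rw [Finset.sum_congr rfl h1, Finset.sum_ite_eq' Φ.simple α (fun δ => δ), if_pos hα]

end RootLemmas

section ILemmas
set_option linter.unusedSectionVars false

variable {V : Type*} [NormedAddCommGroup V] [InnerProductSpace ℝ V] [DecidableEq V]
variable (Φ : RCRS V) (I : Finset V)

lemma RI_coeffs (hI : I ⊆ Φ.simple) {β : V} (hβ : β ∈ Φ.posRootsOf I) :
    ∃ f : V → ℝ, (∀ δ ∈ Φ.simple, 0 ≤ f δ) ∧ (∀ δ ∈ Φ.simple, δ ∉ I → f δ = 0) ∧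
      β = ∑ δ ∈ Φ.simple, f δ • δ := by
  obtain ⟨hpos, c', hrep'⟩ := (mem_posRootsOf_iff' Φ).mp hβ
  obtain ⟨hroot, c, hc, hrep⟩ := (mem_posRoots_iff Φ).mp hpos
  set g : V → ℝ := fun δ => if δ ∈ I then (c' δ : ℝ) else 0 with hg
  have hrepg : β = ∑ δ ∈ Φ.simple, g δ • δ := by
    rw [hrep',
      ← Finset.sum_subset hI (f := fun δ => g δ • δ) (fun δ _ hδI => by simp [hg, hδI])]
    exact Finset.sum_congr rfl (fun δ hδ => by simp [hg, hδ])
  have huniq := coeff_unique Φ (fun δ => (c δ : ℝ)) g (by rw [← hrep, ← hrepg])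
  refine ⟨fun δ => (c δ : ℝ), fun δ hδ => by dsimp only; exact_mod_cast hc δ hδ, ?_, hrep⟩
  intro δ hδ hδI
  have h1 := huniq δ hδ
  simp only [hg, hδI, if_false] at h1
  exact h1

lemma mem_RI_iff (hI : I ⊆ Φ.simple) {β : V} :
    β ∈ Φ.posRootsOf I ↔ β ∈ Φ.posRoots ∧ β ∈ Submodule.span ℝ (I : Set V) := by
  constructor
  · intro h
    obtain ⟨hpos, c', hrep'⟩ := (mem_posRootsOf_iff' Φ).mp h
    exact ⟨hpos, hrep' ▸ Submodule.sum_mem _ (fun δ hδ =>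
      Submodule.smul_mem _ _ (Submodule.subset_span hδ))⟩
  · rintro ⟨hpos, hspan⟩
    obtain ⟨r, -, hr⟩ := Submodule.mem_span_finset.mp hspan
    obtain ⟨hroot, c, hc, hrep⟩ := (mem_posRoots_iff Φ).mp hpos
    set g : V → ℝ := fun δ => if δ ∈ I then r δ else 0 with hg
    have hrepg : β = ∑ δ ∈ Φ.simple, g δ • δ := by
      rw [← hr,
        ← Finset.sum_subset hI (f := fun δ => g δ • δ) (fun δ _ hδI => by simp [hg, hδI])]
      exact Finset.sum_congr rfl (fun δ hδ => by simp [hg, hδ])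
    have huniq := coeff_unique Φ (fun δ => (c δ : ℝ)) g (by rw [← hrep, ← hrepg])
    refine (mem_posRootsOf_iff' Φ).mpr ⟨hpos, c, ?_⟩
    rw [hrep, ← Finset.sum_subset hI (f := fun δ => ((c δ : ℝ)) • δ) ?_]
    intro δ hδ hδI
    have h1 := huniq δ hδ
    simp only [hg, hδI, if_false] at h1
    rw [h1, zero_smul]

lemma RI_sub_posRoots : Φ.posRootsOf I ⊆ Φ.posRoots := by
  classical
  intro β hβ
  exact ((mem_posRootsOf_iff' Φ).mp hβ).1

lemma mem_RI_of_mem_I (hI : I ⊆ Φ.simple) {α : V} (hα : α ∈ I) : α ∈ Φ.posRootsOf I :=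
  (mem_RI_iff Φ I hI).mpr ⟨simple_mem_posRoots Φ (hI hα), Submodule.subset_span hα⟩

lemma root_spanI_dichotomy (hI : I ⊆ Φ.simple) {β : V} (hβ : β ∈ Φ.roots)
    (hspan : β ∈ Submodule.span ℝ (I : Set V)) :
    β ∈ Φ.posRootsOf I ∨ -β ∈ Φ.posRootsOf I := by
  rcases pos_or_neg_pos Φ hβ with h | h
  · exact Or.inl ((mem_RI_iff Φ I hI).mpr ⟨h, hspan⟩)
  · exact Or.inr ((mem_RI_iff Φ I hI).mpr ⟨h, Submodule.neg_mem _ hspan⟩)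

/-- For `α ∈ I`, the reflection `s_α` permutes `R_I⁺ \ {α}`. -/
lemma sref_RI (hI : I ⊆ Φ.simple) {α β : V} (hα : α ∈ I) (hβ : β ∈ Φ.posRootsOf I)
    (hne : β ≠ α) : sref α β ∈ Φ.posRootsOf I ∧ sref α β ≠ α := by
  have hαs := hI hα
  have hαroot := Φ.simple_subset hαs
  have hαne := root_ne_zero Φ hαroot
  obtain ⟨f, hf0, hfI, hrep⟩ := RI_coeffs Φ I hI hβ
  have hβpos := RI_sub_posRoots Φ I hβ
  have hβroot := posRoots_sub_roots Φ hβpos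
  have hβspan := ((mem_RI_iff Φ I hI).mp hβ).2
  have hδ0 : ∃ δ₀ ∈ Φ.simple, δ₀ ≠ α ∧ 0 < f δ₀ := by
    by_contra hcon
    push_neg at hcon
    have hβα : β = f α • α := by
      rw [hrep]
      refine Finset.sum_eq_single α (fun δ hδ hne' => ?_) (fun h => absurd hαs h)
      have h1 := hf0 δ hδ
      have h2 := hcon δ hδ hne'
      have : f δ = 0 := le_antisymm h2 h1
      rw [this, zero_smul]
    rcases Φ.reduced α hαroot (f α) (hβα ▸ hβroot) with h1 | h1
    · exact hne (by rw [hβα, h1, one_smul])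
    · have h2 := hf0 α hαs
      rw [h1] at h2
      linarith
  obtain ⟨δ₀, hδ₀s, hδ₀ne, hδ₀pos⟩ := hδ0
  set k : ℝ := cpair β α with hk
  set g : V → ℝ := fun δ => f δ - (if δ = α then k else 0) with hg
  have hrepg : sref α β = ∑ δ ∈ Φ.simple, g δ • δ := by
    have h1 : ∑ δ ∈ Φ.simple, g δ • δ
        = ∑ δ ∈ Φ.simple, f δ • δ - ∑ δ ∈ Φ.simple, (if δ = α then k • δ else 0) := by
      rw [← Finset.sum_sub_distrib]
      refine Finset.sum_congr rfl (fun δ _ => ?_)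
      simp only [hg]
      split_ifs <;> simp [sub_smul]
    rw [h1, Finset.sum_ite_eq' Φ.simple α (fun δ => k • δ), if_pos hαs, ← hrep]
    rfl
  have hsroot : sref α β ∈ Φ.roots := Φ.reflect_mem α hαroot β hβroot
  have hspos : sref α β ∈ Φ.posRoots := by
    refine pos_of_coeff_pos Φ hsroot g hrepg hδ₀s ?_
    simp only [hg, if_neg hδ₀ne, sub_zero]
    exact hδ₀pos
  have hsspan : sref α β ∈ Submodule.span ℝ (I : Set V) := by
    rw [sref_apply]
    exact Submodule.sub_mem _ hβspan (Submodule.smul_mem _ _ (Submodule.subset_span hα))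
  refine ⟨(mem_RI_iff Φ I hI).mpr ⟨hspos, hsspan⟩, ?_⟩
  intro h
  have hβeq : β = -α := by
    have := congrArg (sref α) h
    rwa [sref_sref hαne, sref_self hαne] at this
  exact not_pos_and_neg_pos Φ (simple_mem_posRoots Φ hαs) (hβeq ▸ hβpos)

lemma cpair_sum_RI (hI : I ⊆ Φ.simple) {α : V} (hα : α ∈ I) :
    cpair (∑ γ ∈ Φ.posRootsOf I, γ) α = 2 := by
  have hαroot := Φ.simple_subset (hI hα)
  have hαne := root_ne_zero Φ hαroot
  have hαRI := mem_RI_of_mem_I Φ I hI hα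
  set S := Φ.posRootsOf I with hS
  have hbij : ∑ γ ∈ S.erase α, sref α γ = ∑ γ ∈ S.erase α, γ := by
    refine Finset.sum_nbij' (i := sref α) (j := sref α) ?_ ?_ ?_ ?_ ?_
    · intro γ hγ
      obtain ⟨hγne, hγS⟩ := Finset.mem_erase.mp hγ
      obtain ⟨h1, h2⟩ := sref_RI Φ I hI hα hγS hγne
      exact Finset.mem_erase.mpr ⟨h2, h1⟩
    · intro γ hγ
      obtain ⟨hγne, hγS⟩ := Finset.mem_erase.mp hγ
      obtain ⟨h1, h2⟩ := sref_RI Φ I hI hα hγS hγne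
      exact Finset.mem_erase.mpr ⟨h2, h1⟩
    · intro γ _; exact sref_sref hαne γ
    · intro γ _; exact sref_sref hαne γ
    · intro γ _; rfl
  have h1 : sref α (∑ γ ∈ S, γ) = ∑ γ ∈ S, γ - (2:ℝ) • α := by
    rw [sref_sum α S (fun γ => γ), ← Finset.sum_erase_add _ _ hαRI, hbij,
      sref_self hαne, Finset.sum_erase_eq_sub hαRI]
    module
  rw [sref_apply] at h1
  have h2 : cpair (∑ γ ∈ S, γ) α • α = (2:ℝ) • α := by
    have h' : (∑ γ ∈ S, γ) - cpair (∑ γ ∈ S, γ) α • α - ((∑ γ ∈ S, γ) - (2:ℝ) • α) = 0 := by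
      rw [h1]; abel
    have h'' : (2:ℝ) • α - cpair (∑ γ ∈ S, γ) α • α = 0 := by rw [← h']; abel
    exact (sub_eq_zero.mp h'').symm
  have h3 : (cpair (∑ γ ∈ S, γ) α - 2) • α = 0 := by
    rw [sub_smul, h2, sub_self]
  rcases smul_eq_zero.mp h3 with h | h
  · linarith
  · exact absurd h hαne

end ILemmas

lemma cpair_sub_left {V : Type*} [NormedAddCommGroup V] [InnerProductSpace ℝ V]
    (x y α : V) : cpair (x - y) α = cpair x α - cpair y α := by
  unfold cpair; rw [inner_sub_left]; ring

section WordLemmas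
set_option linter.unusedSectionVars false

variable {V : Type*} [NormedAddCommGroup V] [InnerProductSpace ℝ V] [DecidableEq V]
variable (Φ : RCRS V) (I : Finset V)

lemma act_sub_mem_spanI {l : List V} (hl : ∀ α ∈ l, α ∈ I) (x : V) :
    act l x - x ∈ Submodule.span ℝ (I : Set V) := by
  induction l with
  | nil => simp
  | cons a l ih =>
    have h1 : act (a :: l) x - x
        = (sref a (act l x) - act l x) + (act l x - x) := by rw [act_cons]; abel
    rw [h1]
    refine Submodule.add_mem _ ?_ (ih (fun α hα => hl α (List.mem_cons_of_mem a hα)))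
    rw [sref_apply]
    have h2 : act l x - cpair (act l x) a • a - act l x = -(cpair (act l x) a • a) := by abel
    rw [h2]
    exact Submodule.neg_mem _ (Submodule.smul_mem _ _
      (Submodule.subset_span (hl a List.mem_cons_self)))

lemma act_mem_spanI {l : List V} (hl : ∀ α ∈ l, α ∈ I) {x : V}
    (hx : x ∈ Submodule.span ℝ (I : Set V)) : act l x ∈ Submodule.span ℝ (I : Set V) := by
  have h1 : act l x = (act l x - x) + x := by abel
  rw [h1]
  exact Submodule.add_mem _ (act_sub_mem_spanI I hl x) hx

/-- A nonnegative combination of positive roots is a nonnegative combination of simple roots. -/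
lemma sum_smul_posRoots_coeffs {ι : Type*} [DecidableEq ι] (s : Finset ι) (g : ι → V) (f : ι → ℝ)
    (hf : ∀ i ∈ s, 0 ≤ f i) (hpos : ∀ i ∈ s, g i ∈ Φ.posRoots) :
    ∃ F : V → ℝ, (∀ ε ∈ Φ.simple, 0 ≤ F ε) ∧
      ∑ i ∈ s, f i • g i = ∑ ε ∈ Φ.simple, F ε • ε := by
  classical
  induction s using Finset.cons_induction with
  | empty => exact ⟨fun _ => 0, fun _ _ => le_rfl, by simp⟩
  | cons a s ha ih =>
    obtain ⟨F, hF0, hFrep⟩ := ih (fun i hi => hf i (Finset.mem_cons_of_mem hi))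
      (fun i hi => hpos i (Finset.mem_cons_of_mem hi))
    obtain ⟨_, c, hc, hcrep⟩ := (mem_posRoots_iff Φ).mp (hpos a (Finset.mem_cons_self a s))
    refine ⟨fun ε => f a * (c ε : ℝ) + F ε, fun ε hε => ?_, ?_⟩
    · have h1 : (0:ℝ) ≤ (c ε : ℝ) := by exact_mod_cast hc ε hε
      have h2 := hf a (Finset.mem_cons_self a s)
      have h3 := hF0 ε hε
      positivity
    · rw [Finset.sum_cons, hFrep, hcrep, Finset.smul_sum]
      rw [← Finset.sum_add_distrib]
      refine Finset.sum_congr rfl (fun ε _ => ?_)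
      rw [add_smul, smul_smul]

lemma all_neg_of_simple_not_pos (hI : I ⊆ Φ.simple) {l : List V} (hl : ∀ α ∈ l, α ∈ I)
    (hneg : ∀ α ∈ I, act l α ∉ Φ.posRootsOf I) :
    ∀ γ ∈ Φ.posRootsOf I, - act l γ ∈ Φ.posRootsOf I := by
  have hlroot : ∀ α ∈ l, α ∈ Φ.roots := fun α hα => Φ.simple_subset (hI (hl α hα))
  have hneg' : ∀ α ∈ I, - act l α ∈ Φ.posRootsOf I := by
    intro α hα
    have hroot : act l α ∈ Φ.roots := act_mem_roots Φ hlroot (Φ.simple_subset (hI hα))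
    have hspan : act l α ∈ Submodule.span ℝ (I : Set V) :=
      act_mem_spanI I hl (Submodule.subset_span hα)
    rcases root_spanI_dichotomy Φ I hI hroot hspan with h | h
    · exact absurd h (hneg α hα)
    · exact h
  intro γ hγ
  obtain ⟨f, hf0, hfI, hrep⟩ := RI_coeffs Φ I hI hγ
  have hγroot : γ ∈ Φ.roots := posRoots_sub_roots Φ (RI_sub_posRoots Φ I hγ)
  have hγspan : γ ∈ Submodule.span ℝ (I : Set V) := ((mem_RI_iff Φ I hI).mp hγ).2
  have hrepI : γ = ∑ δ ∈ I, f δ • δ := by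
    rw [hrep, ← Finset.sum_subset hI (f := fun δ => f δ • δ)
      (fun δ hδ hδI => by rw [hfI δ hδ hδI, zero_smul])]
  have hact : act l γ = - ∑ δ ∈ I, f δ • (- act l δ) := by
    rw [hrepI, act_sum]
    rw [← Finset.sum_neg_distrib]
    refine Finset.sum_congr rfl (fun δ _ => ?_)
    rw [act_smul]
    module
  obtain ⟨F, hF0, hFrep⟩ := sum_smul_posRoots_coeffs Φ I (fun δ => - act l δ) f
    (fun δ hδ => hf0 δ (hI hδ))
    (fun δ hδ => RI_sub_posRoots Φ I (hneg' δ hδ))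
  have hrepneg : act l γ = ∑ ε ∈ Φ.simple, (- F ε) • ε := by
    rw [hact, hFrep, ← Finset.sum_neg_distrib]
    exact Finset.sum_congr rfl (fun ε _ => by rw [neg_smul])
  have hactroot : act l γ ∈ Φ.roots := act_mem_roots Φ hlroot hγroot
  have h1 : - act l γ ∈ Φ.posRoots :=
    neg_pos_of_coeffs_nonpos Φ hactroot _ hrepneg
      (fun ε hε => neg_nonpos.mpr (hF0 ε hε))
  refine (mem_RI_iff Φ I hI).mpr ⟨h1, Submodule.neg_mem _ (act_mem_spanI I hl hγspan)⟩

lemma exists_word_aux (hI : I ⊆ Φ.simple) : ∀ (n : ℕ) (l : List V), (∀ α ∈ l, α ∈ I) →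
    ((Φ.posRootsOf I).filter (fun γ => act l γ ∈ Φ.posRootsOf I)).card ≤ n →
    ∃ l' : List V, (∀ α ∈ l', α ∈ I) ∧
      ∀ γ ∈ Φ.posRootsOf I, - act l' γ ∈ Φ.posRootsOf I := by
  classical
  intro n
  induction n with
  | zero =>
    intro l hl hcard
    refine ⟨l, hl, all_neg_of_simple_not_pos Φ I hI hl (fun α hα hmem => ?_)⟩
    have h1 : α ∈ (Φ.posRootsOf I).filter (fun γ => act l γ ∈ Φ.posRootsOf I) :=
      Finset.mem_filter.mpr ⟨mem_RI_of_mem_I Φ I hI hα, hmem⟩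
    have := Finset.card_pos.mpr ⟨α, h1⟩
    omega
  | succ n ih =>
    intro l hl hcard
    by_cases h : ∃ α ∈ I, act l α ∈ Φ.posRootsOf I
    · obtain ⟨α, hα, hactα⟩ := h
      have hαroot : α ∈ Φ.roots := Φ.simple_subset (hI hα)
      have hαne : α ≠ (0:V) := root_ne_zero Φ hαroot
      have hl' : ∀ β ∈ l ++ [α], β ∈ I := by
        intro β hβ
        rcases List.mem_append.mp hβ with h' | h'
        · exact hl β h'
        · rw [List.mem_singleton.mp h']; exact hα
      have hstep : ∀ γ : V, act (l ++ [α]) γ = act l (sref α γ) := fun γ => by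
        rw [act_append]; rfl
      set A := (Φ.posRootsOf I).filter (fun γ => act l (sref α γ) ∈ Φ.posRootsOf I) with hA
      set B := (Φ.posRootsOf I).filter (fun γ => act l γ ∈ Φ.posRootsOf I) with hB
      have hαB : α ∈ B := Finset.mem_filter.mpr ⟨mem_RI_of_mem_I Φ I hI hα, hactα⟩
      have hinj : Function.Injective (sref α) := by
        intro x y hxy
        rw [← sref_sref hαne x, hxy, sref_sref hαne]
      have himg : A.image (sref α) = B.erase α := by
        apply Finset.Subset.antisymm
        · intro x hx
          obtain ⟨γ, hγ, rfl⟩ := Finset.mem_image.mp hx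
          obtain ⟨hγRI, hγact⟩ := Finset.mem_filter.mp hγ
          have hγne : γ ≠ α := by
            rintro rfl
            rw [sref_self hαne, act_neg] at hγact
            exact not_pos_and_neg_pos Φ (RI_sub_posRoots Φ I hactα)
              (RI_sub_posRoots Φ I hγact)
          obtain ⟨h1, h2⟩ := sref_RI Φ I hI hα hγRI hγne
          exact Finset.mem_erase.mpr ⟨h2, Finset.mem_filter.mpr ⟨h1, hγact⟩⟩
        · intro δ hδ
          obtain ⟨hδne, hδB⟩ := Finset.mem_erase.mp hδ
          obtain ⟨hδRI, hδact⟩ := Finset.mem_filter.mp hδB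
          obtain ⟨h1, h2⟩ := sref_RI Φ I hI hα hδRI hδne
          refine Finset.mem_image.mpr ⟨sref α δ, Finset.mem_filter.mpr ⟨h1, ?_⟩, ?_⟩
          · rw [sref_sref hαne]; exact hδact
          · exact sref_sref hαne δ
      have hcardA : A.card ≤ n := by
        have h1 : A.card = (A.image (sref α)).card :=
          (Finset.card_image_of_injective A hinj).symm
        rw [h1, himg, Finset.card_erase_of_mem hαB]
        omega
      have hfilt : (Φ.posRootsOf I).filter (fun γ => act (l ++ [α]) γ ∈ Φ.posRootsOf I) = A := by
        refine Finset.filter_congr (fun γ _ => ?_)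
        rw [hstep]
      exact ih (l ++ [α]) hl' (by rw [hfilt]; exact hcardA)
    · push_neg at h
      exact ⟨l, hl, all_neg_of_simple_not_pos Φ I hI hl h⟩

lemma exists_word (hI : I ⊆ Φ.simple) :
    ∃ l : List V, (∀ α ∈ l, α ∈ I) ∧
      ∀ γ ∈ Φ.posRootsOf I, - act l γ ∈ Φ.posRootsOf I := by
  classical
  exact exists_word_aux Φ I hI
    ((Φ.posRootsOf I).filter (fun γ => act ([] : List V) γ ∈ Φ.posRootsOf I)).card
    [] (by simp) le_rfl

end WordLemmas

/-- For a subset `I ⊆ S` with `I ≠ S`, there exists a positive root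
`β ∈ R⁺ \ R_I⁺` with `⟨Σ_{α ∈ I} ϖ_α − Σ_{γ ∈ R_I⁺} γ, β∨⟩ = 0`. -/
theorem exists_cpair_eq_zero {V : Type*} [NormedAddCommGroup V] [InnerProductSpace ℝ V] [DecidableEq V]
    (Φ : RCRS V)
    (I : Finset V) (hI : I ⊆ Φ.simple) (hne : I ≠ Φ.simple)
    (ϖ : V → V) (hϖ : Φ.IsFundamentalWeights ϖ) :
    ∃ β ∈ Φ.posRoots \ Φ.posRootsOf I,
      cpair ((∑ α ∈ I, ϖ α) - ∑ γ ∈ Φ.posRootsOf I, γ) β = 0 := by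
  classical
  obtain ⟨γ₀, hγ₀s, hγ₀I⟩ := Finset.exists_of_ssubset (hI.ssubset_of_ne hne)
  obtain ⟨l, hl, hneg⟩ := exists_word Φ I hI
  have hlroot : ∀ α ∈ l, α ∈ Φ.roots := fun α hα => Φ.simple_subset (hI (hl α hα))
  have hlne : ∀ α ∈ l, α ≠ (0:V) := fun α hα => root_ne_zero Φ (hlroot α hα)
  have hγ₀root : γ₀ ∈ Φ.roots := Φ.simple_subset hγ₀s
  -- (1) the word sends the sum of I-positive roots to its negative
  have hactS : act l (∑ γ ∈ Φ.posRootsOf I, γ) = - ∑ γ ∈ Φ.posRootsOf I, γ := by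
    have hinje : Set.InjOn (fun γ => - act l γ) (Φ.posRootsOf I) := by
      intro x _ y _ hxy
      exact act_injective hlne (neg_injective hxy)
    have himg : (Φ.posRootsOf I).image (fun γ => - act l γ) = Φ.posRootsOf I := by
      refine Finset.eq_of_subset_of_card_le ?_ ?_
      · intro x hx
        obtain ⟨γ, hγ, rfl⟩ := Finset.mem_image.mp hx
        exact hneg γ hγ
      · rw [Finset.card_image_of_injOn hinje]
    have hsum : ∑ γ ∈ Φ.posRootsOf I, (- act l γ) = ∑ γ ∈ Φ.posRootsOf I, γ := by
      conv_rhs => rw [← himg]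
      rw [Finset.sum_image (fun x hx y hy h => hinje hx hy h)]
    have h4 : - act l (∑ γ ∈ Φ.posRootsOf I, γ) = ∑ γ ∈ Φ.posRootsOf I, γ := by
      rw [act_sum l (Φ.posRootsOf I) (fun γ => γ), ← hsum, Finset.sum_neg_distrib]
    exact neg_eq_iff_eq_neg.mp h4
  -- (2) pairings of λ and of the I-sum with simple roots in I
  have hcpairlam : ∀ α ∈ I, cpair (∑ a ∈ I, ϖ a) α = 1 := by
    intro α hα
    rw [cpair_sum_left]
    rw [Finset.sum_congr rfl (fun a ha => hϖ a (hI ha) α (hI hα))]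
    rw [Finset.sum_ite_eq' I α (fun _ => (1:ℝ)), if_pos hα]
  -- (3) the vector 2λ - Σ is orthogonal to I, hence fixed by the word
  have hu : ∀ α ∈ l,
      ⟪(2:ℝ) • (∑ a ∈ I, ϖ a) - ∑ γ ∈ Φ.posRootsOf I, γ, α⟫ = 0 := by
    intro α hα
    have hαI := hl α hα
    have h1 : cpair ((2:ℝ) • (∑ a ∈ I, ϖ a) - ∑ γ ∈ Φ.posRootsOf I, γ) α = 0 := by
      rw [cpair_sub_left, cpair_smul_left, hcpairlam α hαI, cpair_sum_RI Φ I hI hαI]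
      ring
    exact inner_eq_zero_of_cpair (root_ne_zero Φ (Φ.simple_subset (hI hαI))) h1
  have hfixu : act l ((2:ℝ) • (∑ a ∈ I, ϖ a) - ∑ γ ∈ Φ.posRootsOf I, γ)
      = (2:ℝ) • (∑ a ∈ I, ϖ a) - ∑ γ ∈ Φ.posRootsOf I, γ := act_fix hu
  -- (4) act l λ = λ - Σ
  have hactlam : act l (∑ a ∈ I, ϖ a) = (∑ a ∈ I, ϖ a) - ∑ γ ∈ Φ.posRootsOf I, γ := by
    have h2 : act l ((2:ℝ) • ∑ a ∈ I, ϖ a)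
        = (2:ℝ) • ((∑ a ∈ I, ϖ a) - ∑ γ ∈ Φ.posRootsOf I, γ) := by
      have h3 : (2:ℝ) • (∑ a ∈ I, ϖ a)
          = ((2:ℝ) • (∑ a ∈ I, ϖ a) - ∑ γ ∈ Φ.posRootsOf I, γ)
            + ∑ γ ∈ Φ.posRootsOf I, γ := by abel
      rw [h3, act_add, hfixu, hactS]
      module
    rw [act_smul] at h2
    exact smul_right_injective V (two_ne_zero) h2
  -- (5) ⟪λ, γ₀⟫ = 0
  have hlamγ₀ : ⟪∑ a ∈ I, ϖ a, γ₀⟫ = 0 := by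
    have h1 : cpair (∑ a ∈ I, ϖ a) γ₀ = 0 := by
      rw [cpair_sum_left]
      rw [Finset.sum_congr rfl (fun a ha => hϖ a (hI ha) γ₀ hγ₀s)]
      rw [Finset.sum_ite_eq' I γ₀ (fun _ => (1:ℝ)), if_neg hγ₀I]
    exact inner_eq_zero_of_cpair (root_ne_zero Φ hγ₀root) h1
  -- (6) the final pairing vanishes
  have hval : ⟪(∑ a ∈ I, ϖ a) - ∑ γ ∈ Φ.posRootsOf I, γ, act l γ₀⟫ = 0 := by
    rw [← hactlam, act_inner hlne]
    exact hlamγ₀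
  -- (7) membership: act l γ₀ ∈ R⁺ \ R_I⁺
  have hβroot : act l γ₀ ∈ Φ.roots := act_mem_roots Φ hlroot hγ₀root
  have hz : act l γ₀ - γ₀ ∈ Submodule.span ℝ (I : Set V) := act_sub_mem_spanI I hl γ₀
  obtain ⟨r, -, hr⟩ := Submodule.mem_span_finset.mp hz
  have hβpos : act l γ₀ ∈ Φ.posRoots := by
    refine pos_of_coeff_pos Φ hβroot
      (fun δ => (if δ = γ₀ then (1:ℝ) else 0) + (if δ ∈ I then r δ else 0)) ?_ hγ₀s ?_
    · have h1 : ∑ δ ∈ Φ.simple,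
          ((if δ = γ₀ then (1:ℝ) else 0) + (if δ ∈ I then r δ else 0)) • δ
          = ∑ δ ∈ Φ.simple, (if δ = γ₀ then δ else 0)
            + ∑ δ ∈ Φ.simple, (if δ ∈ I then r δ else 0) • δ := by
        rw [← Finset.sum_add_distrib]
        refine Finset.sum_congr rfl (fun δ _ => ?_)
        rw [add_smul]
        congr 1
        split_ifs <;> simp
      rw [h1, Finset.sum_ite_eq' Φ.simple γ₀ (fun δ => δ), if_pos hγ₀s]
      have h2 : ∑ δ ∈ Φ.simple, (if δ ∈ I then r δ else 0) • δ = act l γ₀ - γ₀ := by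
        rw [← hr, ← Finset.sum_subset hI (f := fun δ => (if δ ∈ I then r δ else 0) • δ)
          (fun δ _ hδI => by simp [hδI])]
        exact Finset.sum_congr rfl (fun δ hδ => by simp [hδ])
      rw [h2]
      abel
    · simp [hγ₀I]
  have hβnotRI : act l γ₀ ∉ Φ.posRootsOf I := by
    intro hmem
    have hspanβ : act l γ₀ ∈ Submodule.span ℝ (I : Set V) :=
      ((mem_RI_iff Φ I hI).mp hmem).2
    have hγ₀span : γ₀ ∈ Submodule.span ℝ (I : Set V) := by
      have : γ₀ = act l γ₀ - (act l γ₀ - γ₀) := by abel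
      rw [this]
      exact Submodule.sub_mem _ hspanβ hz
    obtain ⟨r', -, hr'⟩ := Submodule.mem_span_finset.mp hγ₀span
    have hrep1 : ∑ δ ∈ Φ.simple, (if δ = γ₀ then (1:ℝ) else 0) • δ = γ₀ := by
      have h1 : ∀ δ ∈ Φ.simple, (if δ = γ₀ then (1:ℝ) else 0) • δ
          = if δ = γ₀ then δ else 0 := by
        intro δ _; split_ifs <;> simp
      rw [Finset.sum_congr rfl h1, Finset.sum_ite_eq' Φ.simple γ₀ (fun δ => δ), if_pos hγ₀s]
    have hrep2 : ∑ δ ∈ Φ.simple, (if δ ∈ I then r' δ else 0) • δ = γ₀ := by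
      rw [← hr', ← Finset.sum_subset hI (f := fun δ => (if δ ∈ I then r' δ else 0) • δ)
        (fun δ _ hδI => by simp [hδI])]
      exact Finset.sum_congr rfl (fun δ hδ => by simp [hδ])
    have huniq := coeff_unique Φ (fun δ => if δ = γ₀ then (1:ℝ) else 0)
      (fun δ => if δ ∈ I then r' δ else 0) (by rw [hrep1, hrep2])
    have h1 := huniq γ₀ hγ₀s
    simp only [if_pos rfl, if_neg hγ₀I] at h1
    exact one_ne_zero h1
  refine ⟨act l γ₀, Finset.mem_sdiff.mpr ⟨hβpos, hβnotRI⟩, ?_⟩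
  unfold cpair
  rw [hval]
  simp
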